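/- For ρ > 0 and ν ∈ ℝ define j₁₁(ρ,ν) := (i/2)·(ν² + ρ⁻² + ρ²), j₁₂(ρ,ν) := −ρν + (i/2)·(ν² + ρ⁻² − ρ²), τ₁(ρ,ν) := √((1 + |j₁₁(ρ,ν)|)/2) (positive real root), and τ₂(ρ,ν) := i·j₁₂(ρ,ν)/(2·τ₁(ρ,ν)). Let (ρ_ℓ), (ρ'_ℓ) be sequences of positive reals with ∑_ℓ (ρ_ℓ − √(π/2))² < ∞ and ∑_ℓ (ρ'_ℓ − √(π/2))² < ∞, and let (ν_ℓ), (ν'_ℓ) be square-summable real sequences. Then the complex sequence τ₂(ρ_ℓ,ν_ℓ)·τ₁(ρ'_ℓ,ν'_ℓ) − τ₁(ρ_ℓ,ν_ℓ)·τ₂(ρ'_ℓ,ν'_ℓ) is square-summable: ∑_ℓ |τ₂(ρ_ℓ,ν_ℓ)·τ₁(ρ'_ℓ,ν'_ℓ) − τ₁(ρ_ℓ,ν_ℓ)·τ₂(ρ'_ℓ,ν'_ℓ)|² < ∞. -/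

import Mathlib

/-- The matrix entry `j₁₁(ρ,ν) = (i/2)(ν² + ρ⁻² + ρ²)` of an `SO(3)`-invariant
complex structure relative to the fiducial one. -/
noncomputable def j11 (ρ ν : ℝ) : ℂ :=
  Complex.I / 2 * ((ν ^ 2 + (ρ ^ 2)⁻¹ + ρ ^ 2 : ℝ) : ℂ)

/-- The matrix entry `j₁₂(ρ,ν) = −ρν + (i/2)(ν² + ρ⁻² − ρ²)`. -/
noncomputable def j12 (ρ ν : ℝ) : ℂ :=
  ((-(ρ * ν) : ℝ) : ℂ) + Complex.I / 2 * ((ν ^ 2 + (ρ ^ 2)⁻¹ - ρ ^ 2 : ℝ) : ℂ)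

/-- `τ₁(ρ,ν) = √((1 + |j₁₁(ρ,ν)|)/2)` (positive real root). -/
noncomputable def tau1 (ρ ν : ℝ) : ℝ :=
  Real.sqrt ((1 + ‖(j11 ρ ν)‖) / 2)

/-- `τ₂(ρ,ν) = i·j₁₂(ρ,ν)/(2 τ₁(ρ,ν))`. -/
noncomputable def tau2 (ρ ν : ℝ) : ℂ :=
  Complex.I * j12 ρ ν / (2 * (tau1 ρ ν : ℂ))

lemma abs_j11 (ρ ν : ℝ) : ‖(j11 ρ ν)‖ = (ν ^ 2 + (ρ ^ 2)⁻¹ + ρ ^ 2) / 2 := by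
  have hx : (0:ℝ) ≤ ν ^ 2 + (ρ ^ 2)⁻¹ + ρ ^ 2 := by positivity
  unfold j11
  rw [norm_mul, norm_div, Complex.norm_I, Complex.norm_two, Complex.norm_real, Real.norm_eq_abs,
    abs_of_nonneg hx]
  ring

lemma tau1_sq (ρ ν : ℝ) : (tau1 ρ ν) ^ 2 = (2 + ν ^ 2 + (ρ ^ 2)⁻¹ + ρ ^ 2) / 4 := by
  unfold tau1
  rw [Real.sq_sqrt (by positivity), abs_j11]
  ring

lemma one_le_tau1 (ρ ν : ℝ) (hρ : 0 < ρ) : 1 ≤ tau1 ρ ν := by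
  have h2 : (2:ℝ) ≤ (ρ ^ 2)⁻¹ + ρ ^ 2 := by
    have h : (ρ ^ 2)⁻¹ + ρ ^ 2 - 2 = (ρ ^ 2 - 1) ^ 2 / ρ ^ 2 := by
      field_simp; ring
    nlinarith [sq_nonneg (ρ^2-1), div_nonneg (sq_nonneg (ρ^2-1)) (sq_nonneg ρ)]
  unfold tau1
  rw [Real.one_le_sqrt, abs_j11]
  nlinarith [sq_nonneg ν]

lemma j12_eq (ρ ν : ℝ) :
    j12 ρ ν = ((-(ρ * ν) : ℝ) : ℂ) + Complex.I * (((ν ^ 2 + (ρ ^ 2)⁻¹ - ρ ^ 2) / 2 : ℝ) : ℂ) := by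
  unfold j12; push_cast; ring

lemma abs_mk_le (a b : ℝ) : ‖((a : ℂ) + Complex.I * (b : ℂ))‖ ≤ |a| + |b| := by
  calc ‖((a : ℂ) + Complex.I * (b : ℂ))‖
      ≤ ‖(a : ℂ)‖ + ‖(Complex.I * (b : ℂ))‖ := norm_add_le _ _
    _ = |a| + |b| := by rw [norm_mul, Complex.norm_I, Complex.norm_real, Real.norm_eq_abs, Complex.norm_real, Real.norm_eq_abs, one_mul]

lemma hF_eq (ρ ρ' ν ν' : ℝ) (hρ : 0 < ρ) (hρ' : 0 < ρ') :
    tau2 ρ ν * ((tau1 ρ' ν' : ℝ) : ℂ) - ((tau1 ρ ν : ℝ) : ℂ) * tau2 ρ' ν' =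
      Complex.I * (j12 ρ ν * (((tau1 ρ' ν') ^ 2 : ℝ) : ℂ) - j12 ρ' ν' * (((tau1 ρ ν) ^ 2 : ℝ) : ℂ)) /
        (2 * ((tau1 ρ ν : ℝ) : ℂ) * ((tau1 ρ' ν' : ℝ) : ℂ)) := by
  have ht : ((tau1 ρ ν : ℝ) : ℂ) ≠ 0 := by
    exact_mod_cast ne_of_gt (lt_of_lt_of_le one_pos (one_le_tau1 ρ ν hρ))
  have ht' : ((tau1 ρ' ν' : ℝ) : ℂ) ≠ 0 := by
    exact_mod_cast ne_of_gt (lt_of_lt_of_le one_pos (one_le_tau1 ρ' ν' hρ'))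
  unfold tau2
  push_cast
  field_simp

set_option maxHeartbeats 2000000 in
lemma key (ρ ρ' ν ν' : ℝ) (hρ1 : 1/2 ≤ ρ) (hρ2 : ρ ≤ 2) (hρ'1 : 1/2 ≤ ρ')
    (hρ'2 : ρ' ≤ 2) (hν1 : |ν| ≤ 1) (hν'1 : |ν'| ≤ 1) :
    ‖(tau2 ρ ν * ((tau1 ρ' ν' : ℝ) : ℂ) - ((tau1 ρ ν : ℝ) : ℂ) * tau2 ρ' ν')‖ ≤
      200 * (|ρ - ρ'| + |ν| + |ν'|) := by
  have hρ0 : 0 < ρ := by linarith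
  have hρ'0 : 0 < ρ' := by linarith
  have hνle : ν ≤ 1 := le_trans (le_abs_self ν) hν1
  have hνge : -1 ≤ ν := by have := neg_abs_le ν; linarith
  have hν'le : ν' ≤ 1 := le_trans (le_abs_self ν') hν'1
  have hν'ge : -1 ≤ ν' := by have := neg_abs_le ν'; linarith
  have hsq : (1:ℝ)/4 ≤ ρ^2 := by
    calc (1:ℝ)/4 = (1/2)^2 := by norm_num
      _ ≤ ρ^2 := pow_le_pow_left₀ (by norm_num) hρ1 2
  have hsq2 : ρ^2 ≤ 4 := by
    calc ρ^2 ≤ 2^2 := pow_le_pow_left₀ (le_of_lt hρ0) hρ2 2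
      _ = 4 := by norm_num
  have hsq' : (1:ℝ)/4 ≤ ρ'^2 := by
    calc (1:ℝ)/4 = (1/2)^2 := by norm_num
      _ ≤ ρ'^2 := pow_le_pow_left₀ (by norm_num) hρ'1 2
  have hsq2' : ρ'^2 ≤ 4 := by
    calc ρ'^2 ≤ 2^2 := pow_le_pow_left₀ (le_of_lt hρ'0) hρ'2 2
      _ = 4 := by norm_num
  have hinvpos : (0:ℝ) < (ρ^2)⁻¹ := by positivity
  have hinvpos' : (0:ℝ) < (ρ'^2)⁻¹ := by positivity
  have hmulinv : (ρ^2)⁻¹ * ρ^2 = 1 := inv_mul_cancel₀ (by positivity)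
  have hmulinv' : (ρ'^2)⁻¹ * ρ'^2 = 1 := inv_mul_cancel₀ (by positivity)
  have hinv : (ρ^2)⁻¹ ≤ 4 := by
    rw [show (4:ℝ) = ((1:ℝ)/4)⁻¹ by norm_num]
    exact inv_anti₀ (by norm_num) hsq
  have hinv' : (ρ'^2)⁻¹ ≤ 4 := by
    rw [show (4:ℝ) = ((1:ℝ)/4)⁻¹ by norm_num]
    exact inv_anti₀ (by norm_num) hsq' 
  set R := |ρ - ρ'| with hR
  have hRnn : 0 ≤ R := abs_nonneg _
  set t := tau1 ρ ν with htdef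
  set t' := tau1 ρ' ν' with ht'def
  have ht1 : 1 ≤ t := one_le_tau1 ρ ν hρ0
  have ht1' : 1 ≤ t' := one_le_tau1 ρ' ν' hρ'0
  have hSnn : 0 ≤ R + |ν| + |ν'| := by
    have := abs_nonneg ν; have := abs_nonneg ν'; linarith
  -- piece bounds
  have hn2 : ν^2 ≤ |ν| := by
    calc ν^2 = |ν| * |ν| := by rw [← sq_abs ν]; ring
      _ ≤ 1 * |ν| := mul_le_mul_of_nonneg_right hν1 (abs_nonneg ν)
      _ = |ν| := one_mul _
  have hn2' : ν'^2 ≤ |ν'| := by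
    calc ν'^2 = |ν'| * |ν'| := by rw [← sq_abs ν']; ring
      _ ≤ 1 * |ν'| := mul_le_mul_of_nonneg_right hν'1 (abs_nonneg ν')
      _ = |ν'| := one_mul _
  have p1 : |ν'^2 - ν^2| ≤ |ν| + |ν'| :=
    abs_le.2 ⟨by linarith [sq_nonneg ν, sq_nonneg ν', abs_nonneg ν, abs_nonneg ν'],
      by linarith [sq_nonneg ν, sq_nonneg ν', abs_nonneg ν, abs_nonneg ν']⟩
  have p2 : |ρ'^2 - ρ^2| ≤ 4 * R := by
    have h : ρ'^2 - ρ^2 = (ρ' + ρ) * (ρ' - ρ) := by ring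
    rw [h, abs_mul, abs_sub_comm ρ' ρ]
    have h4 : |ρ' + ρ| ≤ 4 := abs_le.2 ⟨by linarith, by linarith⟩
    exact mul_le_mul_of_nonneg_right h4 hRnn
  have p3 : |(ρ'^2)⁻¹ - (ρ^2)⁻¹| ≤ 64 * R := by
    have heq : (ρ'^2)⁻¹ - (ρ^2)⁻¹ = (ρ^2 - ρ'^2) / (ρ^2 * ρ'^2) := by
      field_simp
    have hp2 : |ρ^2 - ρ'^2| ≤ 4 * R := by rw [abs_sub_comm]; exact p2
    rw [heq, abs_div]
    have hd : (1:ℝ)/16 ≤ |ρ^2 * ρ'^2| := by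
      rw [abs_of_pos (by positivity)]
      calc (1:ℝ)/16 = 1/4 * (1/4) := by norm_num
        _ ≤ ρ^2 * ρ'^2 := mul_le_mul hsq hsq' (by norm_num) (sq_nonneg ρ)
    calc |ρ^2 - ρ'^2| / |ρ^2 * ρ'^2| ≤ |ρ^2 - ρ'^2| / (1/16) :=
          div_le_div_of_nonneg_left (abs_nonneg _) (by norm_num) hd
      _ = 16 * |ρ^2 - ρ'^2| := by ring
      _ ≤ 64 * R := by linarith
  -- |t'^2 - t^2| ≤ 17 S
  have ht2eq : t'^2 - t^2 = ((ν'^2 - ν^2) + ((ρ'^2)⁻¹ - (ρ^2)⁻¹) + (ρ'^2 - ρ^2)) / 4 := by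
    rw [htdef, ht'def, tau1_sq, tau1_sq]; ring
  have hdB : |t'^2 - t^2| ≤ 17 * (R + |ν| + |ν'|) := by
    rw [ht2eq, abs_div]
    have htri : |(ν'^2 - ν^2) + ((ρ'^2)⁻¹ - (ρ^2)⁻¹) + (ρ'^2 - ρ^2)| ≤
        |ν'^2 - ν^2| + |(ρ'^2)⁻¹ - (ρ^2)⁻¹| + |ρ'^2 - ρ^2| :=
      (abs_add_le _ _).trans (by gcongr; exact abs_add_le _ _)
    rw [abs_of_pos (by norm_num : (0:ℝ) < 4)]
    rw [div_le_iff₀ (by norm_num : (0:ℝ) < 4)]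
    linarith [abs_nonneg ν, abs_nonneg ν']
  -- |A| ≤ 7
  have hA : ‖(j12 ρ ν)‖ ≤ 7 := by
    rw [j12_eq]
    refine (abs_mk_le _ _).trans ?_
    have hρa : |ρ| ≤ 2 := by rw [abs_of_pos hρ0]; linarith
    have h1 : |(-(ρ * ν))| ≤ 2 := by
      rw [abs_neg, abs_mul]
      calc |ρ| * |ν| ≤ 2 * 1 := mul_le_mul hρa hν1 (abs_nonneg ν) (by norm_num)
        _ = 2 := by norm_num
    have h2 : |(ν^2 + (ρ^2)⁻¹ - ρ^2)/2| ≤ 9/2 :=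
      abs_le.2 ⟨by linarith [sq_nonneg ν, sq_nonneg ρ],
        by linarith [sq_nonneg ν, sq_nonneg ρ]⟩
    linarith
  -- t^2 ≤ 3
  have hB : t^2 ≤ 3 := by
    rw [htdef, tau1_sq]; linarith
  -- |A - A'| ≤ 40 S
  have hdA : ‖(j12 ρ ν - j12 ρ' ν')‖ ≤ 40 * (R + |ν| + |ν'|) := by
    have heq : j12 ρ ν - j12 ρ' ν' =
        (((-(ρ * ν) + ρ' * ν') : ℝ) : ℂ) + Complex.I *
          ((((ν^2 - ν'^2) + ((ρ^2)⁻¹ - (ρ'^2)⁻¹) + (ρ'^2 - ρ^2)) / 2 : ℝ) : ℂ) := by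
      rw [j12_eq, j12_eq]; push_cast; ring
    rw [heq]
    refine (abs_mk_le _ _).trans ?_
    have h1 : |(-(ρ * ν) + ρ' * ν')| ≤ 2 * |ν| + 2 * |ν'| + R := by
      have hkey : -(ρ * ν) + ρ' * ν' = -(ρ * (ν - ν')) - ν' * (ρ - ρ') := by ring
      have hρabs : |ρ| ≤ 2 := by rw [abs_of_pos hρ0]; linarith
      have e : |(-(ρ * (ν - ν')) - ν' * (ρ - ρ'))| ≤ |(-(ρ * (ν - ν')))| + |ν' * (ρ - ρ')| :=
        abs_sub _ _
      rw [abs_neg, abs_mul, abs_mul] at e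
      have e2 : |ρ| * |ν - ν'| ≤ 2 * (|ν| + |ν'|) :=
        mul_le_mul hρabs (abs_sub _ _) (abs_nonneg _) (by norm_num)
      have e3 : |ν'| * |ρ - ρ'| ≤ R := by
        rw [hR]
        calc |ν'| * |ρ - ρ'| ≤ 1 * |ρ - ρ'| := mul_le_mul_of_nonneg_right hν'1 (abs_nonneg _)
          _ = |ρ - ρ'| := one_mul _
      rw [hkey]
      linarith
    have h2 : |((ν^2 - ν'^2) + ((ρ^2)⁻¹ - (ρ'^2)⁻¹) + (ρ'^2 - ρ^2)) / 2| ≤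
        (|ν| + |ν'| + 64 * R + 4 * R) / 2 := by
      rw [abs_div, abs_of_pos (by norm_num : (0:ℝ) < 2)]
      have q1 : |ν^2 - ν'^2| ≤ |ν| + |ν'| := by rw [abs_sub_comm]; exact p1
      have q3 : |(ρ^2)⁻¹ - (ρ'^2)⁻¹| ≤ 64 * R := by rw [abs_sub_comm]; exact p3
      have htri : |(ν^2 - ν'^2) + ((ρ^2)⁻¹ - (ρ'^2)⁻¹) + (ρ'^2 - ρ^2)| ≤
          |ν^2 - ν'^2| + |(ρ^2)⁻¹ - (ρ'^2)⁻¹| + |ρ'^2 - ρ^2| :=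
        (abs_add_le _ _).trans (by gcongr; exact abs_add_le _ _)
      have := p2
      linarith
    have : (|ν| + |ν'| + 64 * R + 4 * R) / 2 ≤ 34 * (R + |ν| + |ν'|) := by
      linarith [abs_nonneg ν, abs_nonneg ν']
    linarith [abs_nonneg ν, abs_nonneg ν']
  -- assemble
  rw [hF_eq ρ ρ' ν ν' hρ0 hρ'0]
  rw [norm_div, norm_mul, Complex.norm_I, one_mul, norm_mul, norm_mul, Complex.norm_two,
    Complex.norm_real, Real.norm_eq_abs, Complex.norm_real, Real.norm_eq_abs, abs_of_pos (by linarith : (0:ℝ) < t),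
    abs_of_pos (by linarith : (0:ℝ) < t')]
  have hnum : j12 ρ ν * ((t'^2 : ℝ) : ℂ) - j12 ρ' ν' * ((t^2 : ℝ) : ℂ) =
      j12 ρ ν * (((t'^2 : ℝ) : ℂ) - ((t^2 : ℝ) : ℂ)) + (j12 ρ ν - j12 ρ' ν') * ((t^2 : ℝ) : ℂ) := by
    ring
  have hnumabs : ‖(j12 ρ ν * ((t'^2 : ℝ) : ℂ) - j12 ρ' ν' * ((t^2 : ℝ) : ℂ))‖ ≤
      7 * (17 * (R + |ν| + |ν'|)) + 40 * (R + |ν| + |ν'|) * 3 := by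
    rw [hnum]
    refine (norm_add_le _ _).trans ?_
    rw [norm_mul, norm_mul]
    have e1 : ‖(((t'^2 : ℝ) : ℂ) - ((t^2 : ℝ) : ℂ))‖ = |t'^2 - t^2| := by
      rw [← Complex.ofReal_sub, Complex.norm_real, Real.norm_eq_abs]
    have e2 : ‖((t^2 : ℝ) : ℂ)‖ = t^2 := by
      rw [Complex.norm_real, Real.norm_eq_abs, abs_of_nonneg (sq_nonneg t)]
    rw [e1, e2]
    have b1 : ‖(j12 ρ ν)‖ * |t'^2 - t^2| ≤ 7 * (17 * (R + |ν| + |ν'|)) :=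
      mul_le_mul hA hdB (abs_nonneg _) (by norm_num)
    have b2 : ‖(j12 ρ ν - j12 ρ' ν')‖ * t^2 ≤ 40 * (R + |ν| + |ν'|) * 3 :=
      mul_le_mul hdA hB (sq_nonneg t) (by linarith)
    linarith
  have hden : 2 ≤ 2 * t * t' := by
    have h1 : (1:ℝ) * 1 ≤ t * t' := mul_le_mul ht1 ht1' zero_le_one (by linarith)
    rw [mul_assoc]; linarith
  calc ‖(j12 ρ ν * ((t'^2 : ℝ) : ℂ) - j12 ρ' ν' * ((t^2 : ℝ) : ℂ))‖ / (2 * t * t')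
      ≤ (7 * (17 * (R + |ν| + |ν'|)) + 40 * (R + |ν| + |ν'|) * 3) / 2 :=
        div_le_div₀ (by linarith) hnumabs (by norm_num) hden
    _ ≤ 200 * (R + |ν| + |ν'|) := by linarith

lemma aux_sq3 (a b c : ℝ) : (a + b + c)^2 ≤ 3*(a^2 + b^2 + c^2) := by
  nlinarith [sq_nonneg (a - b), sq_nonneg (b - c), sq_nonneg (a - c)]

lemma aux_sq2 (x y z : ℝ) : (x - y)^2 ≤ 2*(x - z)^2 + 2*(y - z)^2 := by
  nlinarith [sq_nonneg ((x - z) + (y - z))]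

lemma key_sq (ρ ρ' ν ν' r₀ : ℝ) (hr0a : 1 ≤ r₀) (hr0b : r₀ ≤ 3/2)
    (h1 : |ρ - r₀| ≤ 1/4) (h2 : |ρ' - r₀| ≤ 1/4) (h3 : |ν| ≤ 1) (h4 : |ν'| ≤ 1) :
    ‖(tau2 ρ ν * ((tau1 ρ' ν' : ℝ) : ℂ) - ((tau1 ρ ν : ℝ) : ℂ) * tau2 ρ' ν')‖ ^ 2 ≤
      240000 * ((ρ - r₀)^2 + (ρ' - r₀)^2 + ν^2 + ν'^2) := by
  have h1' := abs_le.1 h1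
  have h2' := abs_le.1 h2
  have hρ1 : 1/2 ≤ ρ := by linarith [h1'.1]
  have hρ2 : ρ ≤ 2 := by linarith [h1'.2]
  have hρ'1 : 1/2 ≤ ρ' := by linarith [h2'.1]
  have hρ'2 : ρ' ≤ 2 := by linarith [h2'.2]
  have hF := key ρ ρ' ν ν' hρ1 hρ2 hρ'1 hρ'2 h3 h4
  have hSnn : 0 ≤ |ρ - ρ'| + |ν| + |ν'| := by
    linarith [abs_nonneg (ρ - ρ'), abs_nonneg ν, abs_nonneg ν']
  calc ‖(tau2 ρ ν * ((tau1 ρ' ν' : ℝ) : ℂ) - ((tau1 ρ ν : ℝ) : ℂ) * tau2 ρ' ν')‖ ^ 2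
      ≤ (200 * (|ρ - ρ'| + |ν| + |ν'|))^2 :=
        pow_le_pow_left₀ (norm_nonneg _) hF 2
    _ = 40000 * (|ρ - ρ'| + |ν| + |ν'|)^2 := by ring
    _ ≤ 40000 * (3 * (|ρ - ρ'|^2 + |ν|^2 + |ν'|^2)) :=
        mul_le_mul_of_nonneg_left (aux_sq3 _ _ _) (by norm_num)
    _ ≤ 240000 * ((ρ - r₀)^2 + (ρ' - r₀)^2 + ν^2 + ν'^2) := by
        have e1 : |ρ - ρ'|^2 = (ρ - ρ')^2 := sq_abs _
        have e2 : |ν|^2 = ν^2 := sq_abs _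
        have e3 : |ν'|^2 = ν'^2 := sq_abs _
        have h5 := aux_sq2 ρ ρ' r₀
        rw [e1, e2, e3]
        linarith [sq_nonneg ν, sq_nonneg ν']

set_option maxHeartbeats 1000000 in
/-- Let `(ρ_ℓ)`, `(ρ'_ℓ)` be sequences of positive reals with
`∑ (ρ_ℓ − √(π/2))² < ∞` and `∑ (ρ'_ℓ − √(π/2))² < ∞`, and `(ν_ℓ)`, `(ν'_ℓ)`
square-summable real sequences. Then the complex sequence
`τ₂(ρ_ℓ,ν_ℓ) τ₁(ρ'_ℓ,ν'_ℓ) − τ₁(ρ_ℓ,ν_ℓ) τ₂(ρ'_ℓ,ν'_ℓ)` is square-summable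
(the Hilbert–Schmidt condition for unitary equivalence of the two Fock
representations). -/
theorem stmt_17
    (ρ ρ' ν ν' : ℕ → ℝ)
    (hρpos : ∀ ℓ : ℕ, 0 < ρ ℓ) (hρ'pos : ∀ ℓ : ℕ, 0 < ρ' ℓ)
    (hρ : Summable fun ℓ : ℕ => (ρ ℓ - Real.sqrt (Real.pi / 2)) ^ 2)
    (hρ' : Summable fun ℓ : ℕ => (ρ' ℓ - Real.sqrt (Real.pi / 2)) ^ 2)
    (hν : Summable fun ℓ : ℕ => ν ℓ ^ 2)
    (hν' : Summable fun ℓ : ℕ => ν' ℓ ^ 2) :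
    Summable fun ℓ : ℕ =>
      ‖(tau2 (ρ ℓ) (ν ℓ) * ((tau1 (ρ' ℓ) (ν' ℓ) : ℝ) : ℂ) -
        ((tau1 (ρ ℓ) (ν ℓ) : ℝ) : ℂ) * tau2 (ρ' ℓ) (ν' ℓ))‖ ^ 2 := by
  set r₀ := Real.sqrt (Real.pi / 2) with hr0def
  have hr0a : 1 ≤ r₀ := Real.one_le_sqrt.2 (by linarith [Real.pi_gt_three])
  have hr0b : r₀ ≤ 3/2 := by
    rw [hr0def, show (3:ℝ)/2 = Real.sqrt ((3/2)^2) from (Real.sqrt_sq (by norm_num)).symm]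
    exact Real.sqrt_le_sqrt (by nlinarith [Real.pi_le_four])
  have hd : Summable (fun ℓ => (ρ ℓ - r₀)^2 + (ρ' ℓ - r₀)^2 + ν ℓ^2 + ν' ℓ^2) :=
    ((hρ.add hρ').add hν).add hν'
  have sq_small : ∀ x : ℝ, x^2 < 1/16 → |x| ≤ 1/4 := by
    intro x hx
    exact abs_le.2 ⟨by nlinarith [sq_nonneg (x + 1/4)], by nlinarith [sq_nonneg (x - 1/4)]⟩
  have sq_small1 : ∀ x : ℝ, x^2 < 1 → |x| ≤ 1 := by
    intro x hx
    exact abs_le.2 ⟨by nlinarith [sq_nonneg (x + 1)], by nlinarith [sq_nonneg (x - 1)]⟩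
  have e1 : ∀ᶠ n in Filter.atTop, (ρ n - r₀)^2 < 1/16 :=
    hρ.tendsto_atTop_zero.eventually_lt_const (by norm_num)
  have e2 : ∀ᶠ n in Filter.atTop, (ρ' n - r₀)^2 < 1/16 :=
    hρ'.tendsto_atTop_zero.eventually_lt_const (by norm_num)
  have e3 : ∀ᶠ n in Filter.atTop, (ν n)^2 < 1 :=
    hν.tendsto_atTop_zero.eventually_lt_const (by norm_num)
  have e4 : ∀ᶠ n in Filter.atTop, (ν' n)^2 < 1 :=
    hν'.tendsto_atTop_zero.eventually_lt_const (by norm_num)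
  obtain ⟨N, hN⟩ := Filter.eventually_atTop.1 (((e1.and e2).and e3).and e4)
  rw [← summable_nat_add_iff N]
  refine Summable.of_nonneg_of_le (fun n => sq_nonneg _) (fun n => ?_)
    (((summable_nat_add_iff N).2 hd).mul_left 240000)
  obtain ⟨⟨⟨b1, b2⟩, b3⟩, b4⟩ := hN (n + N) (Nat.le_add_left N n)
  exact key_sq _ _ _ _ _ hr0a hr0b (sq_small _ b1) (sq_small _ b2)
    (sq_small1 _ b3) (sq_small1 _ b4)
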